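/- Let B be a symmetric bilinear form of signature (1,n) on a real vector space V, and suppose J₀, J_μ, J_{μ'} ∈ V (interpreted as restrictions to a surface, i.e., via a trilinear symmetric form d with all values d(J_i,J_j,J_k) ≥ 0). If d(J₀,J₀,J₀) = 0, d(J₀,J₀,J_μ) = 0 for all μ in an index set M, and the restricted classes C_{μ,0} are nonzero with C_{μ,0}·C_{μ,0} ≥ 0 and C_{0,0} ≠ 0 on the surface S₀ (signature (1,k) pairing), then C_{μ,0} = n_μ C_{0,0} with n_μ ∈ ℝ, and consequently d(J₀, J_μ, J_{μ'}) = 0 for all μ, μ' ∈ M. -/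

import Mathlib

/-- The Minkowski-type symmetric bilinear form of signature `(1, k)` on `ℝ^{k+1}`. -/
def mink (k : ℕ) (v w : Fin (k + 1) → ℝ) : ℝ :=
  v 0 * w 0 - ∑ i : Fin k, v i.succ * w i.succ

lemma mink_expand (k : ℕ) (v w : Fin (k + 1) → ℝ) (c : ℝ) :
    mink k (w - c • v) (w - c • v)
      = mink k w w - 2 * c * mink k v w + c ^ 2 * mink k v v := by
  have h : ∀ i : Fin k, (w i.succ - c * v i.succ) * (w i.succ - c * v i.succ)
      = w i.succ * w i.succ - 2 * c * (v i.succ * w i.succ)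
        + c ^ 2 * (v i.succ * v i.succ) := by intro i; ring
  have hA : ∑ i : Fin k, (w i.succ - c * v i.succ) * (w i.succ - c * v i.succ)
      = (∑ i : Fin k, w i.succ * w i.succ) - 2 * c * (∑ i : Fin k, v i.succ * w i.succ)
        + c ^ 2 * (∑ i : Fin k, v i.succ * v i.succ) := by
    rw [Finset.sum_congr rfl (fun i _ => h i), Finset.sum_add_distrib,
      Finset.sum_sub_distrib, ← Finset.mul_sum, ← Finset.mul_sum]
  simp only [mink, Pi.sub_apply, Pi.smul_apply, smul_eq_mul, hA]
  ring

lemma mink_smul (k : ℕ) (v : Fin (k + 1) → ℝ) (c c' : ℝ) :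
    mink k (c • v) (c' • v) = c * c' * mink k v v := by
  simp only [mink, Pi.smul_apply, smul_eq_mul]
  have : ∑ i : Fin k, c * v i.succ * (c' * v i.succ)
      = c * c' * ∑ i : Fin k, v i.succ * v i.succ := by
    rw [Finset.mul_sum]; exact Finset.sum_congr rfl fun i _ => by ring
  rw [this]; ring

lemma null_ortho (k : ℕ) (v w : Fin (k + 1) → ℝ)
    (hv : mink k v v = 0) (hvw : mink k v w = 0) (hw : 0 ≤ mink k w w)
    (hv0 : v ≠ 0) : ∃ c : ℝ, w = c • v := by
  have hv00 : v 0 ≠ 0 := by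
    intro h0
    have hs : ∑ i : Fin k, v i.succ * v i.succ = 0 := by
      have := hv; simp only [mink, h0, zero_mul, zero_sub, neg_eq_zero] at this
      exact this
    have hz : ∀ i : Fin k, v i.succ = 0 := by
      intro i
      have := (Finset.sum_eq_zero_iff_of_nonneg
        (fun j _ => mul_self_nonneg (v j.succ))).mp hs i (Finset.mem_univ i)
      exact mul_self_eq_zero.mp this
    apply hv0
    funext j
    refine Fin.cases ?_ ?_ j
    · exact h0
    · exact hz
  set c : ℝ := w 0 / v 0 with hc
  refine ⟨c, ?_⟩
  set u : Fin (k + 1) → ℝ := w - c • v with hu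
  have hu0 : u 0 = 0 := by
    simp [hu, hc, Pi.sub_apply]
    field_simp
    ring
  have huu : mink k u u = mink k w w := by
    rw [hu, mink_expand, hvw, hv]; ring
  have huu' : mink k u u = - ∑ i : Fin k, u i.succ * u i.succ := by
    simp [mink, hu0]
  have hsum : ∑ i : Fin k, u i.succ * u i.succ = 0 := by
    have h1 : 0 ≤ - ∑ i : Fin k, u i.succ * u i.succ := huu' ▸ huu ▸ hw
    have h2 : 0 ≤ ∑ i : Fin k, u i.succ * u i.succ :=
      Finset.sum_nonneg fun i _ => mul_self_nonneg _
    linarith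
  have hz : ∀ i : Fin k, u i.succ = 0 := fun i =>
    mul_self_eq_zero.mp ((Finset.sum_eq_zero_iff_of_nonneg
      (fun j _ => mul_self_nonneg (u j.succ))).mp hsum i (Finset.mem_univ i))
  have : u = 0 := by
    funext j
    refine Fin.cases ?_ ?_ j
    · exact hu0
    · exact hz
  have := sub_eq_zero.mp (hu ▸ this)
  exact this

theorem stmt_10 (V : Type*) [AddCommGroup V] [Module ℝ V]
    (M : Type*) (k : ℕ)
    (d : V → V → V → ℝ) (J₀ : V) (J : M → V)
    (res : V → (Fin (k + 1) → ℝ))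
    (hcompat : ∀ X Y : V, mink k (res X) (res Y) = d J₀ X Y)
    (h000 : d J₀ J₀ J₀ = 0)
    (h00μ : ∀ μ, d J₀ J₀ (J μ) = 0)
    (hres0 : res J₀ ≠ 0)
    (hresμ : ∀ μ, res (J μ) ≠ 0)
    (hnonneg : ∀ μ, 0 ≤ d J₀ (J μ) (J μ)) :
    (∀ μ, ∃ nμ : ℝ, res (J μ) = nμ • res J₀) ∧
      (∀ μ μ', d J₀ (J μ) (J μ') = 0) := by
  have hv : mink k (res J₀) (res J₀) = 0 := by rw [hcompat]; exact h000
  have hprop : ∀ μ, ∃ nμ : ℝ, res (J μ) = nμ • res J₀ := by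
    intro μ
    exact null_ortho k (res J₀) (res (J μ))
      hv (by rw [hcompat]; exact h00μ μ) ((hcompat _ _) ▸ hnonneg μ) hres0
  refine ⟨hprop, fun μ μ' => ?_⟩
  obtain ⟨c, hcμ⟩ := hprop μ
  obtain ⟨c', hcμ'⟩ := hprop μ'
  rw [← hcompat, hcμ, hcμ', mink_smul, hv, mul_zero]
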